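/- For the Hamiltonian H = E_0|e_0⟩⟨e_0| + Σ_{m=1}^{D−1}(E_0 + Δ)|e_m⟩⟨e_m| (all excited states degenerate at gap Δ > 0), the entanglement criterion p_0 > 2^{−E_R} is equivalent to T < (Δ/k_B) · 1/ln((D−1)/(2^{E_R} − 1)), provided 1 < 2^{E_R} < D. -/
import Mathlib


/-- For the fully degenerate excited spectrum at gap `Δ`, the criterion
`p₀ > 2^{−E_R}` is equivalent to `T < (Δ/k_B)/ln((D−1)/(2^{E_R}−1))`,
provided `1 < 2^{E_R} < D`. -/
theorem stmt_12 (D : ℕ) (hD : 2 ≤ D) (T kB Δ E0 ER : ℝ)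
    (hT : 0 < T) (hkB : 0 < kB) (hΔ : 0 < Δ)
    (h1 : 1 < (2 : ℝ) ^ ER) (h2 : (2 : ℝ) ^ ER < D)
    (Z0 p0 : ℝ)
    (hZ0 : Z0 = Real.exp (-E0 / (kB * T)) * (1 + (D - 1) * Real.exp (-Δ / (kB * T))))
    (hp0 : p0 = Real.exp (-E0 / (kB * T)) / Z0) :
    p0 > (2 : ℝ) ^ (-ER) ↔
      T < (Δ / kB) * (1 / Real.log ((D - 1) / ((2 : ℝ) ^ ER - 1))) := by
  have hD1 : (1:ℝ) ≤ (D:ℝ) - 1 := by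
    have : (2:ℝ) ≤ (D:ℝ) := by exact_mod_cast hD
    linarith
  have hD1' : (0:ℝ) < (D:ℝ) - 1 := by linarith
  have h2' : (0:ℝ) < (2:ℝ) ^ ER - 1 := by linarith
  have hratio : 1 < ((D:ℝ) - 1) / ((2:ℝ) ^ ER - 1) := (one_lt_div h2').mpr (by linarith)
  set L := Real.log (((D:ℝ) - 1) / ((2:ℝ) ^ ER - 1)) with hLdef
  have hL : 0 < L := Real.log_pos hratio
  have hE : 0 < Real.exp (-E0 / (kB * T)) := Real.exp_pos _
  have hx : 0 < Real.exp (-Δ / (kB * T)) := Real.exp_pos _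
  set x := Real.exp (-Δ / (kB * T)) with hxdef
  have hs : 0 < 1 + ((D:ℝ) - 1) * x := by nlinarith
  have hp0' : p0 = 1 / (1 + ((D:ℝ) - 1) * x) := by
    rw [hp0, hZ0]; field_simp
  have h2pos : (0:ℝ) < (2:ℝ) ^ ER := by linarith
  have hpow : (2:ℝ) ^ (-ER) = ((2:ℝ) ^ ER)⁻¹ := Real.rpow_neg (by norm_num) ER
  have hdivpos : 0 < ((2:ℝ) ^ ER - 1) / ((D:ℝ) - 1) := div_pos h2' hD1'
  have hkT : 0 < kB * T := mul_pos hkB hT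
  rw [hp0', hpow, gt_iff_lt, one_div, inv_lt_inv₀ h2pos hs]
  have step2 : 1 + ((D:ℝ) - 1) * x < (2:ℝ) ^ ER ↔ x < ((2:ℝ) ^ ER - 1) / ((D:ℝ) - 1) := by
    rw [lt_div_iff₀ hD1']
    constructor <;> intro h <;> nlinarith
  rw [step2, hxdef, ← Real.lt_log_iff_exp_lt hdivpos]
  have hlogswap : Real.log (((2:ℝ) ^ ER - 1) / ((D:ℝ) - 1)) = -L := by
    rw [hLdef, ← Real.log_inv, inv_div]
  rw [hlogswap, neg_div, neg_lt_neg_iff, lt_div_iff₀ hkT]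
  have heq : (Δ / kB) * (1 / L) = Δ / (kB * L) := by
    field_simp
  rw [heq, lt_div_iff₀ (mul_pos hkB hL)]
  constructor <;> intro h <;> nlinarith
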